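/- Let n ≥ 2, d = 2^n, and suppose a unit vector ψ ∈ ℂ^d is a fiducial vector of a 4-design of the n-qubit Clifford group, i.e. Σ_{a∈𝔽₂^{2n}} |⟨ψ, W_a ψ⟩|^4 = 4d/(d+3). Suppose further that ψ = ψ_1 ⊗ ψ_2 ⊗ ⋯ ⊗ ψ_m is a tensor product of m ≥ 2 unit vectors, where ψ_j ∈ ℂ^{2^{n_j}} with n_1 ≥ n_2 ≥ ⋯ ≥ n_m ≥ 1 and n_1 + ⋯ + n_m = n. Then m ≤ 3, except in the single case n = 4 with n_1 = n_2 = n_3 = n_4 = 1; and if m = 3, then n_2 = n_3 = 1, except when (n_1, n_2, n_3) = (2,2,1) or (n_1, n_2, n_3) = (3,2,1). -/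

import Mathlib

open scoped BigOperators

noncomputable section

/-- `t`-fold tensor (Kronecker) power of a matrix, acting on `(ℂ^α)^{⊗t}`. -/
def tpow {α : Type*} [Fintype α] (M : Matrix α α ℂ) (t : ℕ) :
    Matrix (Fin t → α) (Fin t → α) ℂ :=
  Matrix.of fun x y => ∏ i, M (x i) (y i)

/-- The rank-one operator `|ψ⟩⟨ψ|`. -/
def rankOne {α : Type*} (ψ : α → ℂ) : Matrix α α ℂ :=
  Matrix.of fun i j => ψ i * (starRingEnd ℂ) (ψ j)

/-- The operator `U_σ` permuting the `t` tensor factors of `(ℂ^α)^{⊗t}`. -/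
def permOp (α : Type*) [DecidableEq α] {t : ℕ} (σ : Equiv.Perm (Fin t)) :
    Matrix (Fin t → α) (Fin t → α) ℂ :=
  Matrix.of fun x y => if (fun k => x (σ k)) = y then 1 else 0

/-- The projector `P_[t]` onto the symmetric subspace `Sym_t(ℂ^α)`. -/
def symProj (α : Type*) [DecidableEq α] (t : ℕ) :
    Matrix (Fin t → α) (Fin t → α) ℂ :=
  (t.factorial : ℂ)⁻¹ • ∑ σ : Equiv.Perm (Fin t), permOp α σ

/-- Single-qubit Pauli matrices labelled by `𝔽₂²`. -/
def pauli (a : ZMod 2 × ZMod 2) : Matrix (ZMod 2) (ZMod 2) ℂ :=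
  Matrix.of fun x y =>
    if a = (0, 0) then (if x = y then 1 else 0)
    else if a = (0, 1) then (if x = y + 1 then 1 else 0)
    else if a = (1, 0) then (if x = y then (if x = 0 then 1 else -1) else 0)
    else (if x = y + 1 then (if x = 0 then -Complex.I else Complex.I) else 0)

/-- The Pauli operator `W_a` on qubits labelled by a finite type `Q`. -/
def PauliW {Q : Type*} [Fintype Q] (a : Q → ZMod 2 × ZMod 2) :
    Matrix (Q → ZMod 2) (Q → ZMod 2) ℂ :=
  Matrix.of fun x y => ∏ i, pauli (a i) (x i) (y i)

lemma zmod2_cases (z : ZMod 2) : z = 0 ∨ z = 1 := by revert z; decide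

lemma univ_P : (Finset.univ : Finset (ZMod 2 × ZMod 2)) =
    {(0,0), (0,1), (1,0), (1,1)} := by decide

lemma pauli_complete (x y x' y' : ZMod 2) :
    ∑ a : ZMod 2 × ZMod 2, pauli a x y * (starRingEnd ℂ) (pauli a x' y')
      = if x = x' ∧ y = y' then 2 else 0 := by
  rw [univ_P]
  rcases zmod2_cases x with hx | hx <;> rcases zmod2_cases y with hy | hy <;>
    rcases zmod2_cases x' with hx' | hx' <;> rcases zmod2_cases y' with hy' | hy' <;>
      subst hx hy hx' hy' <;>
        simp (config := { decide := true }) [pauli, Finset.sum_insert, Prod.ext_iff,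
          Complex.ext_iff] <;> norm_num

variable {Q : Type*} [Fintype Q] [DecidableEq Q]

lemma PauliW_complete (x y x' y' : Q → ZMod 2) :
    ∑ a : Q → ZMod 2 × ZMod 2, PauliW a x y * (starRingEnd ℂ) (PauliW a x' y')
      = if x = x' ∧ y = y' then (2 : ℂ) ^ Fintype.card Q else 0 := by
  have h1 : ∀ a : Q → ZMod 2 × ZMod 2,
      PauliW a x y * (starRingEnd ℂ) (PauliW a x' y')
        = ∏ i, (pauli (a i) (x i) (y i) * (starRingEnd ℂ) (pauli (a i) (x' i) (y' i))) := by
    intro a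
    simp only [PauliW, Matrix.of_apply, map_prod, Finset.prod_mul_distrib]
  simp only [h1]
  rw [← Fintype.piFinset_univ, ← Finset.prod_univ_sum
    (fun _ : Q => (Finset.univ : Finset (ZMod 2 × ZMod 2)))
    (fun i b => pauli b (x i) (y i) * (starRingEnd ℂ) (pauli b (x' i) (y' i)))]
  simp only [pauli_complete]
  by_cases h : x = x' ∧ y = y'
  · obtain ⟨h1', h2'⟩ := h
    subst h1' h2'
    simp
  · rw [if_neg h]
    have : ∃ i, ¬(x i = x' i ∧ y i = y' i) := by
      by_contra hc
      push_neg at hc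
      exact h ⟨funext fun i => (hc i).1, funext fun i => (hc i).2⟩
    obtain ⟨i, hi⟩ := this
    exact Finset.prod_eq_zero (Finset.mem_univ i) (by rw [if_neg hi])

def Xval {Q : Type*} [Fintype Q] [DecidableEq Q] (ψ : (Q → ZMod 2) → ℂ) (a : Q → ZMod 2 × ZMod 2) : ℂ :=
  ∑ x, ∑ y, (starRingEnd ℂ) (ψ x) * PauliW a x y * ψ y

lemma sum_normSq (ψ : (Q → ZMod 2) → ℂ)
    (hψ : ∑ x, (starRingEnd ℂ) (ψ x) * ψ x = 1) :
    ∑ a : Q → ZMod 2 × ZMod 2, (Complex.normSq (Xval ψ a) : ℂ)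
      = 2 ^ Fintype.card Q := by
  have key : ∀ a, (Complex.normSq (Xval ψ a) : ℂ)
      = ∑ p : (Q → ZMod 2) × (Q → ZMod 2), ∑ q : (Q → ZMod 2) × (Q → ZMod 2),
          ((starRingEnd ℂ) (ψ p.1) * ψ p.2 * (ψ q.1 * (starRingEnd ℂ) (ψ q.2)))
            * (PauliW a p.1 p.2 * (starRingEnd ℂ) (PauliW a q.1 q.2)) := by
    intro a
    rw [← Complex.mul_conj]
    have hx : Xval ψ a = ∑ p : (Q → ZMod 2) × (Q → ZMod 2),
        (starRingEnd ℂ) (ψ p.1) * PauliW a p.1 p.2 * ψ p.2 := by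
      rw [Xval, ← Finset.sum_product']
      rfl
    rw [hx, map_sum, Finset.sum_mul_sum]
    apply Finset.sum_congr rfl; intro p _
    apply Finset.sum_congr rfl; intro q _
    simp only [map_mul, RingHomCompTriple.comp_apply, RingHom.id_apply]
    ring
  simp only [key]
  rw [Finset.sum_comm]
  have swap2 : ∀ p : (Q → ZMod 2) × (Q → ZMod 2),
      (∑ a : Q → ZMod 2 × ZMod 2, ∑ q : (Q → ZMod 2) × (Q → ZMod 2),
        ((starRingEnd ℂ) (ψ p.1) * ψ p.2 * (ψ q.1 * (starRingEnd ℂ) (ψ q.2)))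
            * (PauliW a p.1 p.2 * (starRingEnd ℂ) (PauliW a q.1 q.2)))
      = (starRingEnd ℂ) (ψ p.1) * ψ p.2 * (ψ p.1 * (starRingEnd ℂ) (ψ p.2))
          * 2 ^ Fintype.card Q := by
    intro p
    rw [Finset.sum_comm]
    have : ∀ q : (Q → ZMod 2) × (Q → ZMod 2),
        (∑ a : Q → ZMod 2 × ZMod 2,
          ((starRingEnd ℂ) (ψ p.1) * ψ p.2 * (ψ q.1 * (starRingEnd ℂ) (ψ q.2)))
            * (PauliW a p.1 p.2 * (starRingEnd ℂ) (PauliW a q.1 q.2)))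
        = ((starRingEnd ℂ) (ψ p.1) * ψ p.2 * (ψ q.1 * (starRingEnd ℂ) (ψ q.2)))
            * (if p.1 = q.1 ∧ p.2 = q.2 then (2 : ℂ) ^ Fintype.card Q else 0) := by
      intro q
      rw [← Finset.mul_sum, PauliW_complete]
    simp only [this]
    have hcollapse : ∀ q : (Q → ZMod 2) × (Q → ZMod 2),
        (if p.1 = q.1 ∧ p.2 = q.2 then (2 : ℂ) ^ Fintype.card Q else 0)
        = (if p = q then (2 : ℂ) ^ Fintype.card Q else 0) := by
      intro q
      congr 1
      simp [Prod.ext_iff]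
    simp only [hcollapse, mul_ite, mul_zero]
    rw [Finset.sum_ite_eq]
    simp
  simp only [swap2]
  rw [← Finset.sum_mul]
  have : (∑ p : (Q → ZMod 2) × (Q → ZMod 2),
      (starRingEnd ℂ) (ψ p.1) * ψ p.2 * (ψ p.1 * (starRingEnd ℂ) (ψ p.2))) = 1 := by
    rw [Fintype.sum_prod_type]
    have : ∀ x : Q → ZMod 2, (∑ y : Q → ZMod 2,
        (starRingEnd ℂ) (ψ x) * ψ y * (ψ x * (starRingEnd ℂ) (ψ y)))
        = ((starRingEnd ℂ) (ψ x) * ψ x) * ∑ y, (starRingEnd ℂ) (ψ y) * ψ y := by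
      intro x
      rw [Finset.mul_sum]
      apply Finset.sum_congr rfl; intro y _; ring
    simp only [this, hψ, mul_one]
  rw [this, one_mul]


lemma pauli00 (x y : ZMod 2) :
    pauli ((0 : ZMod 2), (0 : ZMod 2)) x y = if x = y then 1 else 0 := by
  simp [pauli]

lemma PauliW_zero (x y : Q → ZMod 2) :
    PauliW (fun _ : Q => ((0 : ZMod 2), (0 : ZMod 2))) x y = if x = y then 1 else 0 := by
  simp only [PauliW, Matrix.of_apply, pauli00]
  by_cases h : x = y
  · subst h; simp
  · rw [if_neg h]
    have : ∃ i, ¬ x i = y i := by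
      by_contra hc
      push_neg at hc
      exact h (funext hc)
    obtain ⟨i, hi⟩ := this
    exact Finset.prod_eq_zero (Finset.mem_univ i) (by rw [if_neg hi])

lemma Xval_zero (ψ : (Q → ZMod 2) → ℂ)
    (hψ : ∑ x, (starRingEnd ℂ) (ψ x) * ψ x = 1) :
    Xval ψ (fun _ : Q => ((0 : ZMod 2), (0 : ZMod 2))) = 1 := by
  rw [Xval]
  have : ∀ x : Q → ZMod 2, (∑ y : Q → ZMod 2, (starRingEnd ℂ) (ψ x)
      * PauliW (fun _ : Q => ((0 : ZMod 2), (0 : ZMod 2))) x y * ψ y)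
      = (starRingEnd ℂ) (ψ x) * ψ x := by
    intro x
    have h2 : ∀ y : Q → ZMod 2, (starRingEnd ℂ) (ψ x)
        * PauliW (fun _ : Q => ((0 : ZMod 2), (0 : ZMod 2))) x y * ψ y
        = if x = y then (starRingEnd ℂ) (ψ x) * ψ y else 0 := by
      intro y
      rw [PauliW_zero]
      by_cases h : x = y <;> simp [h]
    simp only [h2]
    rw [Finset.sum_ite_eq]
    simp
  simp only [this, hψ]

lemma F_lower (ψ : (Q → ZMod 2) → ℂ) (hk : 1 ≤ Fintype.card Q)
    (hψ : ∑ x, (starRingEnd ℂ) (ψ x) * ψ x = 1) :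
    2 * (2 : ℝ) ^ Fintype.card Q / ((2 : ℝ) ^ Fintype.card Q + 1)
      ≤ ∑ a : Q → ZMod 2 × ZMod 2, ‖Xval ψ a‖ ^ 4 := by
  have hD2 : (2 : ℝ) ≤ (2 : ℝ) ^ Fintype.card Q := by
    calc (2:ℝ) = 2 ^ 1 := (pow_one 2).symm
    _ ≤ 2 ^ Fintype.card Q := pow_le_pow_right₀ (by norm_num) hk
  have habs : ∀ a : Q → ZMod 2 × ZMod 2,
      ‖Xval ψ a‖ ^ 4 = Complex.normSq (Xval ψ a) ^ 2 := by
    intro a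
    rw [show (4 : ℕ) = 2 * 2 from rfl, pow_mul, Complex.sq_norm]
  simp only [habs]
  have hgsum : ∑ a : Q → ZMod 2 × ZMod 2, Complex.normSq (Xval ψ a)
      = (2 : ℝ) ^ Fintype.card Q := by
    have h2 := sum_normSq ψ hψ
    exact_mod_cast h2
  set D : ℝ := (2 : ℝ) ^ Fintype.card Q with hD
  set z : Q → ZMod 2 × ZMod 2 := fun _ => ((0 : ZMod 2), (0 : ZMod 2)) with hz
  have hg0 : Complex.normSq (Xval ψ z) = 1 := by
    rw [hz, Xval_zero ψ hψ]
    simp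
  have hcard : ((Finset.univ.erase z).card : ℝ) = D ^ 2 - 1 := by
    rw [Finset.card_erase_of_mem (Finset.mem_univ z), Finset.card_univ]
    have hc : Fintype.card (Q → ZMod 2 × ZMod 2) = 4 ^ Fintype.card Q := by
      rw [Fintype.card_fun]
      norm_num
    rw [hc]
    have h1le : 1 ≤ 4 ^ Fintype.card Q := Nat.one_le_pow _ _ (by norm_num)
    rw [Nat.cast_sub h1le]
    push_cast
    rw [hD]
    rw [show (4:ℝ) = 2 ^ 2 by norm_num, ← pow_mul, ← pow_mul, Nat.mul_comm]
  have hsumS : ∑ a ∈ Finset.univ.erase z, Complex.normSq (Xval ψ a) = D - 1 := by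
    have h3 := Finset.add_sum_erase Finset.univ
      (fun a => Complex.normSq (Xval ψ a)) (Finset.mem_univ z)
    rw [hg0, hgsum] at h3
    linarith
  have hCS : (∑ a ∈ Finset.univ.erase z, Complex.normSq (Xval ψ a)) ^ 2
      ≤ (∑ a ∈ Finset.univ.erase z, Complex.normSq (Xval ψ a) ^ 2) * (D ^ 2 - 1) := by
    have h4 := Finset.sum_mul_sq_le_sq_mul_sq (Finset.univ.erase z)
      (fun a => Complex.normSq (Xval ψ a)) (fun _ => 1)
    simp only [mul_one, one_pow, Finset.sum_const, nsmul_eq_mul] at h4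
    calc (∑ a ∈ Finset.univ.erase z, Complex.normSq (Xval ψ a)) ^ 2
        ≤ (∑ a ∈ Finset.univ.erase z, Complex.normSq (Xval ψ a) ^ 2)
            * (Finset.univ.erase z).card := h4
    _ = _ := by rw [hcard]
  rw [hsumS] at hCS
  set T := ∑ a ∈ Finset.univ.erase z, Complex.normSq (Xval ψ a) ^ 2 with hT
  have hTnn : 0 ≤ T := Finset.sum_nonneg (fun a _ => sq_nonneg _)
  have hkey : D - 1 ≤ T * (D + 1) := by
    nlinarith [hCS, hD2, hTnn]
  have hFsplit : ∑ a : Q → ZMod 2 × ZMod 2, Complex.normSq (Xval ψ a) ^ 2 = 1 + T := by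
    have h5 := Finset.add_sum_erase Finset.univ
      (fun a => Complex.normSq (Xval ψ a) ^ 2) (Finset.mem_univ z)
    rw [hg0] at h5
    rw [← h5, one_pow, hT]
  rw [hFsplit]
  rw [div_le_iff₀ (by linarith)]
  nlinarith [hkey]

lemma sigma_sum_prod {m : ℕ} {nv : Fin m → ℕ} {X : Type*} [Fintype X] [DecidableEq X]
    {β : Type*} [CommSemiring β]
    (f : (j : Fin m) → (Fin (nv j) → X) → β) :
    ∑ a : ((j : Fin m) × Fin (nv j)) → X, ∏ j, f j (fun i => a ⟨j, i⟩)
      = ∏ j, ∑ b : Fin (nv j) → X, f j b := by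
  calc ∑ a : ((j : Fin m) × Fin (nv j)) → X, ∏ j, f j (fun i => a ⟨j, i⟩)
      = ∑ x : (j : Fin m) → Fin (nv j) → X, ∏ j, f j (x j) :=
        Equiv.sum_comp (Equiv.piCurry fun (j : Fin m) (_ : Fin (nv j)) => X)
          (fun x : (j : Fin m) → Fin (nv j) → X => ∏ j, f j (x j))
  _ = ∏ j, ∑ b : Fin (nv j) → X, f j b := by
        rw [Finset.prod_univ_sum, Fintype.piFinset_univ]


section SigmaFact

variable {m : ℕ} {nv : Fin m → ℕ}

lemma PauliW_sigma (a : ((j : Fin m) × Fin (nv j)) → ZMod 2 × ZMod 2)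
    (x y : ((j : Fin m) × Fin (nv j)) → ZMod 2) :
    PauliW a x y = ∏ j, PauliW (fun i => a ⟨j, i⟩)
      (fun i => x ⟨j, i⟩) (fun i => y ⟨j, i⟩) := by
  simp only [PauliW, Matrix.of_apply]
  rw [← Finset.univ_sigma_univ, Finset.prod_sigma]

variable (ψv : (j : Fin m) → (Fin (nv j) → ZMod 2) → ℂ)
    (ψ : (((j : Fin m) × Fin (nv j)) → ZMod 2) → ℂ)
    (hψ : ∀ x, ψ x = ∏ j, ψv j (fun i => x ⟨j, i⟩))

include hψ in
lemma Xval_prod (a : ((j : Fin m) × Fin (nv j)) → ZMod 2 × ZMod 2) :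
    Xval ψ a = ∏ j, Xval (ψv j) (fun i => a ⟨j, i⟩) := by
  rw [Xval]
  have hpt : ∀ x y : ((j : Fin m) × Fin (nv j)) → ZMod 2,
      (starRingEnd ℂ) (ψ x) * PauliW a x y * ψ y
      = ∏ j, ((starRingEnd ℂ) (ψv j (fun i => x ⟨j, i⟩))
          * PauliW (fun i => a ⟨j, i⟩) (fun i => x ⟨j, i⟩) (fun i => y ⟨j, i⟩)
          * ψv j (fun i => y ⟨j, i⟩)) := by
    intro x y
    rw [hψ x, hψ y, map_prod, PauliW_sigma a x y,
      ← Finset.prod_mul_distrib, ← Finset.prod_mul_distrib]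
  simp only [hpt]
  have h1 : ∀ x : ((j : Fin m) × Fin (nv j)) → ZMod 2,
      (∑ y : ((j : Fin m) × Fin (nv j)) → ZMod 2,
        ∏ j, ((starRingEnd ℂ) (ψv j (fun i => x ⟨j, i⟩))
          * PauliW (fun i => a ⟨j, i⟩) (fun i => x ⟨j, i⟩) (fun i => y ⟨j, i⟩)
          * ψv j (fun i => y ⟨j, i⟩)))
      = ∏ j, ∑ b : Fin (nv j) → ZMod 2,
          ((starRingEnd ℂ) (ψv j (fun i => x ⟨j, i⟩))
            * PauliW (fun i => a ⟨j, i⟩) (fun i => x ⟨j, i⟩) b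
            * ψv j b) := by
    intro x
    exact sigma_sum_prod (fun j b =>
      (starRingEnd ℂ) (ψv j (fun i => x ⟨j, i⟩))
        * PauliW (fun i => a ⟨j, i⟩) (fun i => x ⟨j, i⟩) b * ψv j b)
  simp only [h1]
  have h2 := sigma_sum_prod (fun (j : Fin m) (c : Fin (nv j) → ZMod 2) =>
    ∑ b : Fin (nv j) → ZMod 2,
      ((starRingEnd ℂ) (ψv j c) * PauliW (fun i => a ⟨j, i⟩) c b * ψv j b))
  rw [h2]
  apply Finset.prod_congr rfl
  intro j _
  rw [Xval]

include hψ in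
lemma F_prod :
    ∑ a : ((j : Fin m) × Fin (nv j)) → ZMod 2 × ZMod 2, ‖Xval ψ a‖ ^ 4
      = ∏ j, ∑ b : Fin (nv j) → ZMod 2 × ZMod 2, ‖Xval (ψv j) b‖ ^ 4 := by
  have h1 : ∀ a : ((j : Fin m) × Fin (nv j)) → ZMod 2 × ZMod 2,
      ‖Xval ψ a‖ ^ 4
      = ∏ j, ‖Xval (ψv j) (fun i => a ⟨j, i⟩)‖ ^ 4 := by
    intro a
    rw [Xval_prod ψv ψ hψ a, norm_prod, ← Finset.prod_pow]
  simp only [h1]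
  exact sigma_sum_prod (fun (j : Fin m) (b : Fin (nv j) → ZMod 2 × ZMod 2) =>
    ‖Xval (ψv j) b‖ ^ 4)

end SigmaFact

lemma pow43 : ∀ m : ℕ, 5 ≤ m → 4 * 3 ^ m < 4 ^ m := by
  intro m hm
  induction m with
  | zero => omega
  | succ k ih =>
    rcases Nat.lt_or_ge k 5 with h | h
    · interval_cases k <;> first | omega | norm_num
    · have h1 := ih (by omega)
      have : 4 * 3 ^ (k + 1) = 3 * (4 * 3 ^ k) := by ring
      rw [this]
      calc 3 * (4 * 3 ^ k) < 3 * 4 ^ k := by omega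
      _ ≤ 4 * 4 ^ k := by omega
      _ = 4 ^ (k + 1) := by ring

lemma pow2_big {a c : ℕ} (h : 2 ^ a ≤ c) (hc : c < 2 ^ b) : a < b := by
  by_contra hab
  push_neg at hab
  have := Nat.pow_le_pow_right (show 1 ≤ 2 by norm_num) hab
  omega

lemma comb (m n : ℕ) (hm : 2 ≤ m)
    (nv : Fin m → ℕ) (hpos : ∀ j, 1 ≤ nv j)
    (hmono : ∀ j k : Fin m, j ≤ k → nv k ≤ nv j)
    (hsum : ∑ j, nv j = n)
    (hineq : 2 ^ m * (2 ^ n + 3) ≤ 4 * ∏ j, (2 ^ (nv j) + 1)) :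
    (m ≤ 3 ∨ (n = 4 ∧ m = 4 ∧ ∀ j, nv j = 1)) ∧
      ∀ hm3 : m = 3,
        (nv ⟨1, by omega⟩ = 1 ∧ nv ⟨2, by omega⟩ = 1) ∨
          (nv ⟨0, by omega⟩ = 2 ∧ nv ⟨1, by omega⟩ = 2 ∧ nv ⟨2, by omega⟩ = 1) ∨
          (nv ⟨0, by omega⟩ = 3 ∧ nv ⟨1, by omega⟩ = 2 ∧ nv ⟨2, by omega⟩ = 1) := by
  -- first: m ≤ 4
  have hprodpow : ∏ j, (2:ℕ) ^ (nv j) = 2 ^ n := by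
    rw [Finset.prod_pow_eq_pow_sum, hsum]
  have hfac : ∀ j, 2 * (2 ^ (nv j) + 1) ≤ 3 * 2 ^ (nv j) := by
    intro j
    have h1 := hpos j
    have : (2:ℕ)^1 ≤ 2 ^ (nv j) := Nat.pow_le_pow_right (by norm_num) h1
    omega
  have hstep : ∏ j, (2 * (2 ^ (nv j) + 1)) ≤ ∏ j, (3 * 2 ^ (nv j)) :=
    Finset.prod_le_prod' (fun j _ => hfac j)
  have hL : ∏ j, (2 * ((2:ℕ) ^ (nv j) + 1)) = 2 ^ m * ∏ j, (2 ^ (nv j) + 1) := by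
    rw [Finset.prod_mul_distrib, Finset.prod_const, Finset.card_univ, Fintype.card_fin]
  have hR : ∏ j, (3 * (2:ℕ) ^ (nv j)) = 3 ^ m * 2 ^ n := by
    rw [Finset.prod_mul_distrib, Finset.prod_const, Finset.card_univ, Fintype.card_fin,
      hprodpow]
  rw [hL, hR] at hstep
  have hm4 : m ≤ 4 := by
    by_contra hc
    push_neg at hc
    have h43 := pow43 m (by omega)
    -- 2^m * (2^m * (2^n+3)) ≤ 2^m * (4 * ∏) = 4 * (2^m * ∏) ≤ 4 * (3^m * 2^n)
    have c1 : 2 ^ m * (2 ^ m * (2 ^ n + 3)) ≤ 2 ^ m * (4 * ∏ j, (2 ^ (nv j) + 1)) :=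
      Nat.mul_le_mul_left _ hineq
    have c2 : 2 ^ m * (4 * ∏ j, (2 ^ (nv j) + 1)) = 4 * (2 ^ m * ∏ j, (2 ^ (nv j) + 1)) := by
      ring
    have c3 : 4 * (2 ^ m * ∏ j, (2 ^ (nv j) + 1)) ≤ 4 * (3 ^ m * 2 ^ n) :=
      Nat.mul_le_mul_left _ hstep
    have c4 : 4 ^ m * 2 ^ n ≤ 2 ^ m * (2 ^ m * (2 ^ n + 3)) := by
      have : (4:ℕ) ^ m = 2 ^ m * 2 ^ m := by
        rw [show (4:ℕ) = 2 * 2 by norm_num, mul_pow]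
      nlinarith [pow_pos (show 0 < 2 by norm_num) m]
    have c5 : 4 ^ m * 2 ^ n ≤ 4 * 3 ^ m * 2 ^ n := by
      calc 4 ^ m * 2 ^ n ≤ 2 ^ m * (2 ^ m * (2 ^ n + 3)) := c4
      _ ≤ 4 * (3 ^ m * 2 ^ n) := le_trans c1 (c2 ▸ c3)
      _ = 4 * 3 ^ m * 2 ^ n := by ring
    have hpow : 0 < 2 ^ n := pow_pos (by norm_num) n
    have : (4:ℕ) ^ m ≤ 4 * 3 ^ m := Nat.le_of_mul_le_mul_right c5 hpow
    omega
  clear hstep hL hR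
  have hm234 : m = 2 ∨ m = 3 ∨ m = 4 := by omega
  rcases hm234 with h2 | h3 | h4
  · subst h2
    exact ⟨Or.inl (by omega), fun hm3 => by omega⟩
  · subst h3
    refine ⟨Or.inl (by omega), fun _ => ?_⟩
    have ha : nv ⟨0, by omega⟩ = nv 0 := rfl
    have hb : nv ⟨1, by omega⟩ = nv 1 := rfl
    have hc : nv ⟨2, by omega⟩ = nv 2 := rfl
    rw [Fin.sum_univ_three] at hsum
    rw [Fin.prod_univ_three] at hineq
    have hba : nv 1 ≤ nv 0 := hmono 0 1 (by decide)
    have hcb : nv 2 ≤ nv 1 := hmono 1 2 (by decide)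
    rw [ha, hb, hc]
    by_cases hc2 : 2 ≤ nv 2
    · exfalso
      have hA4 : 4 ≤ 2 ^ (nv 0) := by
        calc (4:ℕ) = 2 ^ 2 := by norm_num
        _ ≤ 2 ^ (nv 0) := Nat.pow_le_pow_right (by norm_num) (by omega)
      have hB4 : 4 ≤ 2 ^ (nv 1) := by
        calc (4:ℕ) = 2 ^ 2 := by norm_num
        _ ≤ 2 ^ (nv 1) := Nat.pow_le_pow_right (by norm_num) (by omega)
      have hC4 : 4 ≤ 2 ^ (nv 2) := by
        calc (4:ℕ) = 2 ^ 2 := by norm_num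
        _ ≤ 2 ^ (nv 2) := Nat.pow_le_pow_right (by norm_num) (by omega)
      set A := 2 ^ (nv 0) with hAdef
      set B := 2 ^ (nv 1) with hBdef
      set C := 2 ^ (nv 2) with hCdef
      have hn : 2 ^ n = A * (B * C) := by
        rw [← hsum, pow_add, pow_add, hAdef, hBdef, hCdef, mul_assoc]
      rw [hn] at hineq
      have h1 : 4 * (A * B) ≤ A * (B * C) := by
        calc 4 * (A * B) = (A * B) * 4 := by ring
        _ ≤ (A * B) * C := Nat.mul_le_mul_left _ hC4
        _ = A * (B * C) := by ring
      have h2 : 4 * (A * C) ≤ A * (B * C) := by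
        calc 4 * (A * C) = (A * C) * 4 := by ring
        _ ≤ (A * C) * B := Nat.mul_le_mul_left _ hB4
        _ = A * (B * C) := by ring
      have h3 : 4 * (B * C) ≤ A * (B * C) := by
        calc 4 * (B * C) = (B * C) * 4 := by ring
        _ ≤ (B * C) * A := Nat.mul_le_mul_left _ hA4
        _ = A * (B * C) := by ring
      have h4 : 16 * A ≤ A * (B * C) := by
        calc 16 * A = A * (4 * 4) := by ring
        _ ≤ A * (B * C) := Nat.mul_le_mul_left _ (Nat.mul_le_mul hB4 hC4)
      have h5 : 16 * B ≤ A * (B * C) := by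
        calc 16 * B = B * (4 * 4) := by ring
        _ ≤ B * (A * C) := Nat.mul_le_mul_left _ (Nat.mul_le_mul hA4 hC4)
        _ = A * (B * C) := by ring
      have h6 : 16 * C ≤ A * (B * C) := by
        calc 16 * C = C * (4 * 4) := by ring
        _ ≤ C * (A * B) := Nat.mul_le_mul_left _ (Nat.mul_le_mul hA4 hB4)
        _ = A * (B * C) := by ring
      have hexp : 4 * ((A + 1) * (B + 1) * (C + 1))
          = 4 * (A * (B * C)) + 4 * (A * B) + 4 * (A * C) + 4 * (B * C)
            + 4 * A + 4 * B + 4 * C + 4 := by ring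
      have hlhs : 2 ^ 3 * (A * (B * C) + 3) = 8 * (A * (B * C)) + 24 := by ring
      rw [hexp, hlhs] at hineq
      linarith
    · have hc1 : nv 2 = 1 := by have := hpos ⟨2, by omega⟩; omega
      by_cases hb2 : 2 ≤ nv 1
      · -- c = 1, b ≥ 2 : forces b = 2 and a ∈ {2,3}
        have hB4 : 4 ≤ 2 ^ (nv 1) := by
          calc (4:ℕ) = 2 ^ 2 := by norm_num
          _ ≤ 2 ^ (nv 1) := Nat.pow_le_pow_right (by norm_num) (by omega)
        have hBA : 2 ^ (nv 1) ≤ 2 ^ (nv 0) := Nat.pow_le_pow_right (by norm_num) hba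
        set A := 2 ^ (nv 0) with hAdef
        set B := 2 ^ (nv 1) with hBdef
        have hn : 2 ^ n = A * (B * 2) := by
          rw [← hsum, hc1, pow_add, pow_add, hAdef, hBdef, mul_assoc]
          norm_num
        rw [hn, hc1] at hineq
        have hexp : 4 * ((A + 1) * (B + 1) * (2 ^ 1 + 1))
            = 12 * (A * B) + 12 * A + 12 * B + 12 := by ring
        have hlhs : 2 ^ 3 * (A * (B * 2) + 3) = 16 * (A * B) + 24 := by ring
        rw [hexp, hlhs] at hineq
        -- 4AB + 12 ≤ 12A + 12B
        have hb2' : nv 1 = 2 := by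
          by_contra hb3
          have hB8 : 8 ≤ B := by
            rw [hBdef]
            calc (8:ℕ) = 2 ^ 3 := by norm_num
            _ ≤ 2 ^ (nv 1) := Nat.pow_le_pow_right (by norm_num) (by omega)
          have h8A : 8 * A ≤ A * B := by
            calc 8 * A = A * 8 := by ring
            _ ≤ A * B := Nat.mul_le_mul_left _ hB8
          linarith
        have hB4' : B = 4 := by rw [hBdef, hb2']; norm_num
        rw [hB4'] at hineq
        -- 16A + 12 ≤ ... : 4A ≤ 3A + ... A ≤ 9
        have hA9 : A ≤ 9 := by linarith
        have ha3 : nv 0 ≤ 3 := by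
          have := pow2_big (b := 4) (hAdef ▸ hA9) (by norm_num)
          omega
        have ha2 : 2 ≤ nv 0 := by omega
        rcases (by omega : nv 0 = 2 ∨ nv 0 = 3) with h | h
        · exact Or.inr (Or.inl ⟨h, hb2', hc1⟩)
        · exact Or.inr (Or.inr ⟨h, hb2', hc1⟩)
      · exact Or.inl ⟨by omega, hc1⟩
  · subst h4
    have hb : nv ⟨1, by omega⟩ = nv 1 := rfl
    rw [Fin.sum_univ_four] at hsum
    rw [Fin.prod_univ_four] at hineq
    have hba : nv 1 ≤ nv 0 := hmono 0 1 (by decide)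
    have hcb : nv 2 ≤ nv 1 := hmono 1 2 (by decide)
    have hdc : nv 3 ≤ nv 2 := hmono 2 3 (by decide)
    have hkey : ∀ j, nv j = 1 := by
      by_cases hb2 : 2 ≤ nv 1
      · exfalso
        have hA4 : 4 ≤ 2 ^ (nv 0) := by
          calc (4:ℕ) = 2 ^ 2 := by norm_num
          _ ≤ 2 ^ (nv 0) := Nat.pow_le_pow_right (by norm_num) (by omega)
        have hB4 : 4 ≤ 2 ^ (nv 1) := by
          calc (4:ℕ) = 2 ^ 2 := by norm_num
          _ ≤ 2 ^ (nv 1) := Nat.pow_le_pow_right (by norm_num) (by omega)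
        have hC2 : 2 ≤ 2 ^ (nv 2) := by
          calc (2:ℕ) = 2 ^ 1 := by norm_num
          _ ≤ 2 ^ (nv 2) := Nat.pow_le_pow_right (by norm_num) (hpos 2)
        have hE2 : 2 ≤ 2 ^ (nv 3) := by
          calc (2:ℕ) = 2 ^ 1 := by norm_num
          _ ≤ 2 ^ (nv 3) := Nat.pow_le_pow_right (by norm_num) (hpos 3)
        set A := 2 ^ (nv 0)
        set B := 2 ^ (nv 1)
        set C := 2 ^ (nv 2)
        set E := 2 ^ (nv 3)
        have hn : 2 ^ n = A * (B * (C * E)) := by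
          rw [← hsum, pow_add, pow_add, pow_add]
          ring
        rw [hn] at hineq
        -- (4(A+1))(4(B+1))(2(C+1))(2(E+1)) ≤ 5A·5B·3C·3E
        have k1 : (4 * (A + 1)) * (4 * (B + 1)) ≤ (5 * A) * (5 * B) :=
          Nat.mul_le_mul (by omega) (by omega)
        have k2 : (2 * (C + 1)) * (2 * (E + 1)) ≤ (3 * C) * (3 * E) :=
          Nat.mul_le_mul (by omega) (by omega)
        have k3 : ((4 * (A + 1)) * (4 * (B + 1))) * ((2 * (C + 1)) * (2 * (E + 1)))
            ≤ ((5 * A) * (5 * B)) * ((3 * C) * (3 * E)) := Nat.mul_le_mul k1 k2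
        have e1 : ((4 * (A + 1)) * (4 * (B + 1))) * ((2 * (C + 1)) * (2 * (E + 1)))
            = 16 * (4 * ((A + 1) * (B + 1) * (C + 1) * (E + 1))) := by ring
        have e2 : ((5 * A) * (5 * B)) * ((3 * C) * (3 * E))
            = 225 * (A * (B * (C * E))) := by ring
        rw [e1, e2] at k3
        have k4 : 16 * (2 ^ 4 * (A * (B * (C * E)) + 3))
            ≤ 16 * (4 * ((A + 1) * (B + 1) * (C + 1) * (E + 1))) :=
          Nat.mul_le_mul_left _ hineq
        have k5 : 16 * (2 ^ 4 * (A * (B * (C * E)) + 3))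
            = 256 * (A * (B * (C * E))) + 768 := by ring
        rw [k5] at k4
        have hprodpos : 1 ≤ A * (B * (C * E)) :=
          Nat.one_le_iff_ne_zero.mpr (by positivity)
        linarith
      · -- nv 1 = nv 2 = nv 3 = 1
        have hb1 : nv 1 = 1 := by have := hpos 1; omega
        have hc1 : nv 2 = 1 := by have := hpos 2; omega
        have hd1 : nv 3 = 1 := by have := hpos 3; omega
        have ha1 : nv 0 = 1 := by
          by_contra ha2
          have hA4 : 4 ≤ 2 ^ (nv 0) := by
            calc (4:ℕ) = 2 ^ 2 := by norm_num
            _ ≤ 2 ^ (nv 0) := Nat.pow_le_pow_right (by norm_num) (by have := hpos 0; omega)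
          set A := 2 ^ (nv 0)
          have hn : 2 ^ n = A * 8 := by
            rw [← hsum, hb1, hc1, hd1, pow_add, pow_add, pow_add]
            ring
          rw [hn, hb1, hc1, hd1] at hineq
          -- 16(8A+3) ≤ 4·27(A+1) = 108A+108 : 128A+48 ≤ 108A+108 : A ≤ 3
          have : 2 ^ 4 * (A * 8 + 3) = 128 * A + 48 := by ring
          rw [this] at hineq
          have : 4 * ((A + 1) * (2 ^ 1 + 1) * (2 ^ 1 + 1) * (2 ^ 1 + 1))
              = 108 * A + 108 := by ring
          rw [this] at hineq
          linarith
        intro j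
        fin_cases j <;> assumption
    refine ⟨Or.inr ⟨?_, rfl, hkey⟩, fun hm3 => by omega⟩
    rw [← hsum, hkey 0, hkey 1, hkey 2, hkey 3]


/-- If a unit vector `ψ ∈ ℂ^{2^n}` (`n ≥ 2`) is a 4-design fiducial, i.e.
`Σ_a |⟨ψ, W_a ψ⟩|⁴ = 4d/(d+3)` with `d = 2^n`, and `ψ = ψ_1 ⊗ ⋯ ⊗ ψ_m` is a tensor product
of `m ≥ 2` unit vectors `ψ_j ∈ ℂ^{2^{n_j}}` with `n_1 ≥ ⋯ ≥ n_m ≥ 1` and `Σ n_j = n`, then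
`m ≤ 3` except in the single case `n = 4`, `n_1 = n_2 = n_3 = n_4 = 1`; and if `m = 3` then
`n_2 = n_3 = 1` except when `(n_1,n_2,n_3) = (2,2,1)` or `(3,2,1)`. -/
theorem stmt17 (n m : ℕ) (hn : 2 ≤ n) (hm : 2 ≤ m)
    (nv : Fin m → ℕ) (hpos : ∀ j, 1 ≤ nv j)
    (hmono : ∀ j k : Fin m, j ≤ k → nv k ≤ nv j)
    (hsum : ∑ j, nv j = n)
    (ψv : (j : Fin m) → (Fin (nv j) → ZMod 2) → ℂ)
    (hunit : ∀ j, ∑ x, (starRingEnd ℂ) (ψv j x) * ψv j x = 1)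
    (ψ : (((j : Fin m) × Fin (nv j)) → ZMod 2) → ℂ)
    (hψ : ∀ x, ψ x = ∏ j, ψv j (fun i => x ⟨j, i⟩))
    (hfid : ∑ a : ((j : Fin m) × Fin (nv j)) → ZMod 2 × ZMod 2,
        ‖∑ x, (starRingEnd ℂ) (ψ x) * Matrix.mulVec (PauliW a) ψ x‖ ^ 4
      = 4 * (2 : ℝ) ^ n / ((2 : ℝ) ^ n + 3)) :
    (m ≤ 3 ∨ (n = 4 ∧ m = 4 ∧ ∀ j, nv j = 1)) ∧
      ∀ hm3 : m = 3,
        (nv ⟨1, by omega⟩ = 1 ∧ nv ⟨2, by omega⟩ = 1) ∨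
          (nv ⟨0, by omega⟩ = 2 ∧ nv ⟨1, by omega⟩ = 2 ∧ nv ⟨2, by omega⟩ = 1) ∨
          (nv ⟨0, by omega⟩ = 3 ∧ nv ⟨1, by omega⟩ = 2 ∧ nv ⟨2, by omega⟩ = 1) := by
  classical
  have hXv : ∀ a : ((j : Fin m) × Fin (nv j)) → ZMod 2 × ZMod 2,
      (∑ x, (starRingEnd ℂ) (ψ x) * Matrix.mulVec (PauliW a) ψ x) = Xval ψ a := by
    intro a
    rw [Xval]
    apply Finset.sum_congr rfl
    intro x _
    rw [Matrix.mulVec, dotProduct, Finset.mul_sum]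
    apply Finset.sum_congr rfl
    intro y _
    ring
  simp only [hXv] at hfid
  rw [F_prod ψv ψ hψ] at hfid
  have hFj : ∀ j, 2 * (2 : ℝ) ^ (nv j) / ((2 : ℝ) ^ (nv j) + 1)
      ≤ ∑ b : Fin (nv j) → ZMod 2 × ZMod 2, ‖Xval (ψv j) b‖ ^ 4 := by
    intro j
    have h := F_lower (Q := Fin (nv j)) (ψv j)
      (by rw [Fintype.card_fin]; exact hpos j) (hunit j)
    rwa [Fintype.card_fin] at h
  have hkey : ∀ j, 2 * (2 : ℝ) ^ (nv j)
      ≤ (∑ b : Fin (nv j) → ZMod 2 × ZMod 2, ‖Xval (ψv j) b‖ ^ 4)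
          * ((2 : ℝ) ^ (nv j) + 1) := by
    intro j
    have hpos' : (0 : ℝ) < (2 : ℝ) ^ (nv j) + 1 := by positivity
    exact (div_le_iff₀ hpos').mp (hFj j)
  have hP : ∏ j, (2 * (2 : ℝ) ^ (nv j))
      ≤ ∏ j, ((∑ b : Fin (nv j) → ZMod 2 × ZMod 2, ‖Xval (ψv j) b‖ ^ 4)
          * ((2 : ℝ) ^ (nv j) + 1)) :=
    Finset.prod_le_prod (fun j _ => by positivity) (fun j _ => hkey j)
  rw [Finset.prod_mul_distrib, Finset.prod_mul_distrib, hfid, Finset.prod_const,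
    Finset.card_univ, Fintype.card_fin, Finset.prod_pow_eq_pow_sum, hsum] at hP
  set Xr : ℝ := ∏ j, ((2 : ℝ) ^ (nv j) + 1) with hXr
  have hXrnn : (0 : ℝ) ≤ Xr := Finset.prod_nonneg (fun j _ => by positivity)
  have hd3 : (0 : ℝ) < (2 : ℝ) ^ n + 3 := by positivity
  have h3 : (2 : ℝ) ^ m * (2 : ℝ) ^ n * ((2 : ℝ) ^ n + 3) ≤ 4 * (2 : ℝ) ^ n * Xr := by
    have h4 := mul_le_mul_of_nonneg_right hP (le_of_lt hd3)
    have e : 4 * (2 : ℝ) ^ n / ((2 : ℝ) ^ n + 3) * Xr * ((2 : ℝ) ^ n + 3)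
        = 4 * (2 : ℝ) ^ n * Xr := by
      field_simp
    rw [e] at h4
    exact h4
  have h5 : (2 : ℝ) ^ m * ((2 : ℝ) ^ n + 3) ≤ 4 * Xr := by
    have hn2 : (0 : ℝ) < (2 : ℝ) ^ n := by positivity
    have e2 : (2 : ℝ) ^ m * (2 : ℝ) ^ n * ((2 : ℝ) ^ n + 3)
        = (2 : ℝ) ^ n * ((2 : ℝ) ^ m * ((2 : ℝ) ^ n + 3)) := by ring
    have e3 : 4 * (2 : ℝ) ^ n * Xr = (2 : ℝ) ^ n * (4 * Xr) := by ring
    rw [e2, e3] at h3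
    exact le_of_mul_le_mul_left h3 hn2
  have hnat : 2 ^ m * (2 ^ n + 3) ≤ 4 * ∏ j, (2 ^ (nv j) + 1) := by
    have hcast : ((2 ^ m * (2 ^ n + 3) : ℕ) : ℝ) ≤ ((4 * ∏ j, (2 ^ (nv j) + 1) : ℕ) : ℝ) := by
      push_cast
      rw [hXr] at h5
      convert h5 using 2
    exact_mod_cast hcast
  exact comb m n hm nv hpos hmono hsum hnat

end
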